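/- Let f : ℝ^d → ℝ^d be differentiable with Jacobian Df, let N ≥ 1 and step sizes h₀,…,h_{N−1} > 0. For (q₀, p₀) ∈ ℝ^d × ℝ^d define the Störmer–Verlet iterates: q_{n+1/2} = q_n + (h_n/2) p_n, p_{n+1} = p_n − h_n f(q_{n+1/2}), q_{n+1} = q_{n+1/2} + (h_n/2) p_{n+1}, for n = 0,…,N−1. Let J : ℝ^d × ℝ^d → ℝ be differentiable and set R(q₀, p₀) = J(q_N, p_N). Fix (q₀, p₀), and suppose sequences (λ_n)_{n=0}^N, (ν_n)_{n=0}^N, (ν_{n+1/2})_{n=0}^{N−1} satisfy ν_{n+1/2} = ν_n − (h_n/2) λ_n, λ_{n+1} = λ_n + h_n (Df(q_{n+1/2}))^⊤ ν_{n+1/2}, ν_{n+1} = ν_{n+1/2} − (h_n/2) λ_{n+1} for n = 0,…,N−1, together with the final condition (λ_N, ν_N) = (∇_q J(q_N, p_N), ∇_p J(q_N, p_N)). Then (λ₀, ν₀) = (∇_{q₀} R(q₀, p₀), ∇_{p₀} R(q₀, p₀)). -/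

import Mathlib

/-- Störmer–Verlet iterates: `q_{n+1/2} = q_n + (h_n/2) p_n`, `p_{n+1} = p_n - h_n f(q_{n+1/2})`,
`q_{n+1} = q_{n+1/2} + (h_n/2) p_{n+1}`. -/
noncomputable def svIter {E : Type*} [NormedAddCommGroup E] [NormedSpace ℝ E]
    (f : E → E) (h : ℕ → ℝ) (q0 p0 : E) : ℕ → E × E
  | 0 => (q0, p0)
  | n + 1 =>
    let qp := svIter f h q0 p0 n
    let qh := qp.1 + (h n / 2) • qp.2
    let p' := qp.2 - h n • f qh
    (qh + (h n / 2) • p', p')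

open ContinuousLinearMap InnerProductSpace

section Aux

variable {E : Type*} [NormedAddCommGroup E] [NormedSpace ℝ E]

/-- One step of the Störmer–Verlet method as a map on phase space. -/
noncomputable def svStep (f : E → E) (hn : ℝ) (x : E × E) : E × E :=
  (x.1 + (hn / 2) • x.2 + (hn / 2) • (x.2 - hn • f (x.1 + (hn / 2) • x.2)),
   x.2 - hn • f (x.1 + (hn / 2) • x.2))

lemma svIter_succ' (f : E → E) (h : ℕ → ℝ) (q0 p0 : E) (n : ℕ) :
    svIter f h q0 p0 (n + 1) = svStep f (h n) (svIter f h q0 p0 n) := rfl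

/-- Iterating `m` steps of Störmer–Verlet starting from step index `n`. -/
noncomputable def svRest (f : E → E) (h : ℕ → ℝ) : ℕ → ℕ → E × E → E × E
  | 0, _, x => x
  | m + 1, n, x => svRest f h m (n + 1) (svStep f (h n) x)

lemma svRest_iter (f : E → E) (h : ℕ → ℝ) (q0 p0 : E) (m : ℕ) :
    ∀ n, svRest f h m n (svIter f h q0 p0 n) = svIter f h q0 p0 (n + m) := by
  induction m with
  | zero => intro n; rfl
  | succ m ih =>
    intro n
    have e : svRest f h (m + 1) n (svIter f h q0 p0 n)
        = svRest f h m (n + 1) (svIter f h q0 p0 (n + 1)) := by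
      rw [svIter_succ']; rfl
    rw [e, ih (n + 1)]
    congr 1
    omega

lemma svIter_eq_svRest (f : E → E) (h : ℕ → ℝ) (q p : E) (m : ℕ) :
    svIter f h q p m = svRest f h m 0 (q, p) := by
  have := svRest_iter f h q p m 0
  have h0 : svIter f h q p 0 = (q, p) := rfl
  rw [h0] at this
  simpa using this.symm

lemma hasFDerivAt_svStep (f : E → E) (hf : Differentiable ℝ f) (hn : ℝ) (x : E × E) :
    HasFDerivAt (svStep f hn)
      (((fst ℝ E E + (hn / 2) • snd ℝ E E) + (hn / 2) •
          (snd ℝ E E - hn • ((fderiv ℝ f (x.1 + (hn / 2) • x.2)).comp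
            (fst ℝ E E + (hn / 2) • snd ℝ E E)))).prod
        (snd ℝ E E - hn • ((fderiv ℝ f (x.1 + (hn / 2) • x.2)).comp
          (fst ℝ E E + (hn / 2) • snd ℝ E E)))) x := by
  have h1 : HasFDerivAt (fun x : E × E => x.1 + (hn / 2) • x.2)
      (fst ℝ E E + (hn / 2) • snd ℝ E E) x :=
    (hasFDerivAt_fst).add ((hasFDerivAt_snd).const_smul _)
  have h2 : HasFDerivAt (fun x : E × E => x.2 - hn • f (x.1 + (hn / 2) • x.2))
      (snd ℝ E E - hn • ((fderiv ℝ f (x.1 + (hn / 2) • x.2)).comp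
        (fst ℝ E E + (hn / 2) • snd ℝ E E))) x :=
    (hasFDerivAt_snd).sub ((((hf _).hasFDerivAt).comp x h1).const_smul hn)
  exact HasFDerivAt.prodMk (h1.add (h2.const_smul _)) h2

end Aux

section Main

variable {E : Type*} [NormedAddCommGroup E] [InnerProductSpace ℝ E] [CompleteSpace E]

lemma svAdjoint (N : ℕ)
    (f : E → E) (hf : Differentiable ℝ f) (h : ℕ → ℝ)
    (J : E → E → ℝ)
    (hJ : Differentiable ℝ (fun qp : E × E => J qp.1 qp.2))
    (q0 p0 : E) (lam nu nuh : ℕ → E)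
    (hnuh : ∀ n, n < N → nuh n = nu n - (h n / 2) • lam n)
    (hlam : ∀ n, n < N → lam (n + 1) = lam n + h n •
      (ContinuousLinearMap.adjoint
        (fderiv ℝ f ((svIter f h q0 p0 n).1 + (h n / 2) • (svIter f h q0 p0 n).2))) (nuh n))
    (hnu : ∀ n, n < N → nu (n + 1) = nuh n - (h n / 2) • lam (n + 1))
    (hlamN : lam N = gradient (fun q => J q (svIter f h q0 p0 N).2) (svIter f h q0 p0 N).1)
    (hnuN : nu N = gradient (fun p => J (svIter f h q0 p0 N).1 p) (svIter f h q0 p0 N).2) :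
    lam 0 = gradient (fun q0' => J (svIter f h q0' p0 N).1 (svIter f h q0' p0 N).2) q0 ∧
    nu 0 = gradient (fun p0' => J (svIter f h q0 p0' N).1 (svIter f h q0 p0' N).2) p0 := by
  have key : ∀ j, j ≤ N →
      HasFDerivAt (fun x : E × E => J (svRest f h j (N - j) x).1 (svRest f h j (N - j) x).2)
        ((toDual ℝ E (lam (N - j)) : E →L[ℝ] ℝ).comp (fst ℝ E E) +
          (toDual ℝ E (nu (N - j)) : E →L[ℝ] ℝ).comp (snd ℝ E E))
        (svIter f h q0 p0 (N - j)) := by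
    intro j
    induction j with
    | zero =>
      intro _
      simp only [Nat.sub_zero]
      set xN := svIter f h q0 p0 N with hxN
      have hD : HasFDerivAt (fun x : E × E => J x.1 x.2)
          (fderiv ℝ (fun x : E × E => J x.1 x.2) xN) xN := (hJ _).hasFDerivAt
      set D := fderiv ℝ (fun x : E × E => J x.1 x.2) xN with hDdef
      have hq : HasFDerivAt (fun q : E => J q xN.2) (D.comp (inl ℝ E E)) xN.1 := by
        have hpair : HasFDerivAt (fun q : E => (q, xN.2)) (inl ℝ E E) xN.1 :=
          HasFDerivAt.prodMk (hasFDerivAt_id _) (hasFDerivAt_const _ _)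
        exact hD.comp xN.1 hpair
      have hp : HasFDerivAt (fun p : E => J xN.1 p) (D.comp (inr ℝ E E)) xN.2 := by
        have hpair : HasFDerivAt (fun p : E => (xN.1, p)) (inr ℝ E E) xN.2 :=
          HasFDerivAt.prodMk (hasFDerivAt_const _ _) (hasFDerivAt_id _)
        exact hD.comp xN.2 hpair
      have hgl : (toDual ℝ E (lam N) : E →L[ℝ] ℝ) = D.comp (inl ℝ E E) := by
        rw [hlamN]
        exact (hasGradientAt_iff_hasFDerivAt.mp
          (hq.differentiableAt.hasGradientAt)).unique hq
      have hgn : (toDual ℝ E (nu N) : E →L[ℝ] ℝ) = D.comp (inr ℝ E E) := by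
        rw [hnuN]
        exact (hasGradientAt_iff_hasFDerivAt.mp
          (hp.differentiableAt.hasGradientAt)).unique hp
      have heq : D =
          (toDual ℝ E (lam N) : E →L[ℝ] ℝ).comp (fst ℝ E E) +
            (toDual ℝ E (nu N) : E →L[ℝ] ℝ).comp (snd ℝ E E) := by
        ext u
        · rw [hgl]; simp
        · rw [hgn]; simp
      rw [← heq]
      exact hD
    | succ j ih =>
      intro hj
      have hmN : N - (j + 1) < N := by omega
      set m := N - (j + 1) with hm
      have hNj : N - j = m + 1 := by omega
      rw [hNj] at ih
      have ih' := ih (by omega)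
      set xm := svIter f h q0 p0 m with hxm
      have hstep := hasFDerivAt_svStep f hf (h m) xm
      have hpt : svStep f (h m) xm = svIter f h q0 p0 (m + 1) := (svIter_succ' f h q0 p0 m).symm
      rw [← hpt] at ih'
      have hcomp := ih'.comp xm hstep
      have hder :
          ((toDual ℝ E (lam (m + 1)) : E →L[ℝ] ℝ).comp (fst ℝ E E) +
            (toDual ℝ E (nu (m + 1)) : E →L[ℝ] ℝ).comp (snd ℝ E E)).comp
          (((fst ℝ E E + (h m / 2) • snd ℝ E E) + (h m / 2) •
              (snd ℝ E E - h m • ((fderiv ℝ f (xm.1 + (h m / 2) • xm.2)).comp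
                (fst ℝ E E + (h m / 2) • snd ℝ E E)))).prod
            (snd ℝ E E - h m • ((fderiv ℝ f (xm.1 + (h m / 2) • xm.2)).comp
              (fst ℝ E E + (h m / 2) • snd ℝ E E))))
          = (toDual ℝ E (lam m) : E →L[ℝ] ℝ).comp (fst ℝ E E) +
              (toDual ℝ E (nu m) : E →L[ℝ] ℝ).comp (snd ℝ E E) := by
        have hlam' := hlam m hmN
        have hnu' := hnu m hmN
        have hnuh' := hnuh m hmN
        rw [← hxm] at hlam'
        ext u
        · rw [hlam' , hnu', hlam', hnuh']
          simp only [ContinuousLinearMap.comp_apply, ContinuousLinearMap.add_apply,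
            ContinuousLinearMap.smul_apply, ContinuousLinearMap.sub_apply,
            ContinuousLinearMap.prod_apply, ContinuousLinearMap.coe_fst',
            ContinuousLinearMap.coe_snd', ContinuousLinearMap.inl_apply,
            InnerProductSpace.toDual_apply_apply, map_add, map_sub, map_smul, map_zero,
            smul_zero, add_zero, zero_add, Prod.fst, Prod.snd]
          simp only [inner_add_left, inner_add_right, inner_sub_left, inner_sub_right,
            real_inner_smul_left, real_inner_smul_right,
            ContinuousLinearMap.adjoint_inner_left, smul_add, smul_sub, smul_smul,
            inner_zero_right, inner_zero_left, smul_zero, add_zero, zero_add, smul_eq_mul]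
          ring
        · rw [hlam' , hnu', hlam', hnuh']
          simp only [ContinuousLinearMap.comp_apply, ContinuousLinearMap.add_apply,
            ContinuousLinearMap.smul_apply, ContinuousLinearMap.sub_apply,
            ContinuousLinearMap.prod_apply, ContinuousLinearMap.coe_fst',
            ContinuousLinearMap.coe_snd', ContinuousLinearMap.inr_apply,
            InnerProductSpace.toDual_apply_apply, map_add, map_sub, map_smul, map_zero,
            smul_zero, add_zero, zero_add, Prod.fst, Prod.snd]
          simp only [inner_add_left, inner_add_right, inner_sub_left, inner_sub_right,
            real_inner_smul_left, real_inner_smul_right,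
            ContinuousLinearMap.adjoint_inner_left, smul_add, smul_sub, smul_smul,
            inner_zero_right, inner_zero_left, smul_zero, add_zero, zero_add, smul_eq_mul]
          ring
      rw [hder] at hcomp
      exact hcomp
  have key0 := key N le_rfl
  simp only [Nat.sub_self] at key0
  have h0 : svIter f h q0 p0 0 = (q0, p0) := rfl
  rw [h0] at key0
  constructor
  · have hpair : HasFDerivAt (fun q : E => (q, p0)) (inl ℝ E E) q0 :=
      HasFDerivAt.prodMk (hasFDerivAt_id _) (hasFDerivAt_const _ _)
    have hq : HasFDerivAt (fun q : E => J (svRest f h N 0 (q, p0)).1 (svRest f h N 0 (q, p0)).2)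
        (((toDual ℝ E (lam 0) : E →L[ℝ] ℝ).comp (fst ℝ E E) +
          (toDual ℝ E (nu 0) : E →L[ℝ] ℝ).comp (snd ℝ E E)).comp (inl ℝ E E)) q0 :=
      by have := key0.comp q0 hpair; exact this
    have hder : ((toDual ℝ E (lam 0) : E →L[ℝ] ℝ).comp (fst ℝ E E) +
          (toDual ℝ E (nu 0) : E →L[ℝ] ℝ).comp (snd ℝ E E)).comp (inl ℝ E E)
        = (toDual ℝ E (lam 0) : E →L[ℝ] ℝ) := by
      ext u; simp
    rw [hder] at hq
    have hg : HasGradientAt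
        (fun q : E => J (svRest f h N 0 (q, p0)).1 (svRest f h N 0 (q, p0)).2) (lam 0) q0 :=
      hasGradientAt_iff_hasFDerivAt.mpr hq
    simp only [svIter_eq_svRest]
    exact hg.gradient.symm
  · have hpair : HasFDerivAt (fun p : E => (q0, p)) (inr ℝ E E) p0 :=
      HasFDerivAt.prodMk (hasFDerivAt_const _ _) (hasFDerivAt_id _)
    have hp : HasFDerivAt (fun p : E => J (svRest f h N 0 (q0, p)).1 (svRest f h N 0 (q0, p)).2)
        (((toDual ℝ E (lam 0) : E →L[ℝ] ℝ).comp (fst ℝ E E) +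
          (toDual ℝ E (nu 0) : E →L[ℝ] ℝ).comp (snd ℝ E E)).comp (inr ℝ E E)) p0 :=
      key0.comp p0 hpair
    have hder : ((toDual ℝ E (lam 0) : E →L[ℝ] ℝ).comp (fst ℝ E E) +
          (toDual ℝ E (nu 0) : E →L[ℝ] ℝ).comp (snd ℝ E E)).comp (inr ℝ E E)
        = (toDual ℝ E (nu 0) : E →L[ℝ] ℝ) := by
      ext u; simp
    rw [hder] at hp
    have hg : HasGradientAt
        (fun p : E => J (svRest f h N 0 (q0, p)).1 (svRest f h N 0 (q0, p)).2) (nu 0) p0 :=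
      hasGradientAt_iff_hasFDerivAt.mpr hp
    simp only [svIter_eq_svRest]
    exact hg.gradient.symm

end Main

/-- Discrete adjoint of the Störmer–Verlet method: with
`R(q₀,p₀) = J(q_N, p_N)` and the backward adjoint scheme
`ν_{n+1/2} = ν_n - (h_n/2) λ_n`, `λ_{n+1} = λ_n + h_n (Df(q_{n+1/2}))ᵀ ν_{n+1/2}`,
`ν_{n+1} = ν_{n+1/2} - (h_n/2) λ_{n+1}` with final condition
`(λ_N, ν_N) = (∇_q J(q_N,p_N), ∇_p J(q_N,p_N))`, one has
`(λ₀, ν₀) = (∇_{q₀} R(q₀,p₀), ∇_{p₀} R(q₀,p₀))`. -/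
theorem stmt_14 (d N : ℕ) (hN : 1 ≤ N)
    (f : EuclideanSpace ℝ (Fin d) → EuclideanSpace ℝ (Fin d))
    (hf : Differentiable ℝ f)
    (h : ℕ → ℝ) (hh : ∀ n, n < N → 0 < h n)
    (J : EuclideanSpace ℝ (Fin d) → EuclideanSpace ℝ (Fin d) → ℝ)
    (hJ : Differentiable ℝ (fun qp : EuclideanSpace ℝ (Fin d) × EuclideanSpace ℝ (Fin d) =>
      J qp.1 qp.2))
    (q0 p0 : EuclideanSpace ℝ (Fin d))
    (lam nu nuh : ℕ → EuclideanSpace ℝ (Fin d))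
    (hnuh : ∀ n, n < N → nuh n = nu n - (h n / 2) • lam n)
    (hlam : ∀ n, n < N → lam (n + 1) = lam n + h n •
      (ContinuousLinearMap.adjoint
        (fderiv ℝ f ((svIter f h q0 p0 n).1 + (h n / 2) • (svIter f h q0 p0 n).2))) (nuh n))
    (hnu : ∀ n, n < N → nu (n + 1) = nuh n - (h n / 2) • lam (n + 1))
    (hlamN : lam N = gradient (fun q => J q (svIter f h q0 p0 N).2) (svIter f h q0 p0 N).1)
    (hnuN : nu N = gradient (fun p => J (svIter f h q0 p0 N).1 p) (svIter f h q0 p0 N).2) :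
    lam 0 = gradient (fun q0' => J (svIter f h q0' p0 N).1 (svIter f h q0' p0 N).2) q0 ∧
    nu 0 = gradient (fun p0' => J (svIter f h q0 p0' N).1 (svIter f h q0 p0' N).2) p0 :=
  svAdjoint N f hf h J hJ q0 p0 lam nu nuh hnuh hlam hnu hlamN hnuN
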